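/- Let U be a unitary on ℂ^d⊗ℂ^d and define H = Σ_{i=1}^{N−1} (σ⁻_i σ⁺_{i+1} ⊗ U_{i,i+1} + σ⁺_i σ⁻_{i+1} ⊗ U†_{i,i+1}) on head qubits and data qudits. Then H is Hermitian, and in the single-excitation head sector, e^{−iHt} applied to |1⟩^a⊗|ψ⟩ produces, in the component where the head is at site N, the state |N⟩^a ⊗ (U_{N−1,N}⋯U_{1,2}|ψ⟩) times the amplitude f_N(t) for transfer in the bare hopping chain; i.e., ⟨N|^a e^{−iHt} |1⟩^a⊗|ψ⟩ = f_N(t)·U_{N−1,N}⋯U_{1,2}|ψ⟩ where f_N(t) = ⟨N|e^{−iAt}|1⟩ with A the path adjacency matrix. -/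

import Mathlib

open Matrix

variable (N d : ℕ)

/-- Head configuration with a single excitation at site `i`. -/
def headState (i : Fin N) : (Fin N → Fin 2) → ℂ :=
  fun f => if f = (fun k => if k = i then 1 else 0) then 1 else 0

/-- Tensor product of a head vector and a data vector. -/
def tensorState (φ : (Fin N → Fin 2) → ℂ) (ψ : (Fin N → Fin d) → ℂ) :
    ((Fin N → Fin 2) × (Fin N → Fin d)) → ℂ :=
  fun p => φ p.1 * ψ p.2

/-- The two-site gate `U` applied to data qudits `i, j`:
`(U_{i,j}ψ)(g) = Σ_x U_{(g i, g j), x} ψ(g[i ↦ x₁][j ↦ x₂])`. -/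
noncomputable def applyU (U : Matrix (Fin d × Fin d) (Fin d × Fin d) ℂ) (i j : Fin N)
    (ψ : (Fin N → Fin d) → ℂ) : (Fin N → Fin d) → ℂ :=
  fun g => ∑ x : Fin d × Fin d,
    U (g i, g j) x * ψ (Function.update (Function.update g i x.1) j x.2)

/-- The product `U_{k,k+1} ⋯ U_{1,2}` applied to a data vector (0-indexed: step `k`
acts on sites `k, k+1`). -/
noncomputable def prodU (U : Matrix (Fin d × Fin d) (Fin d × Fin d) ℂ)
    (ψ : (Fin N → Fin d) → ℂ) : ℕ → ((Fin N → Fin d) → ℂ)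
  | 0 => ψ
  | k + 1 =>
    if h : k + 1 < N then applyU N d U ⟨k, by omega⟩ ⟨k + 1, h⟩ (prodU U ψ k)
    else prodU U ψ k

/-- The controlled-unitary hopping Hamiltonian
`H = Σ_{i=1}^{N−1} σ⁻_i σ⁺_{i+1} ⊗ U_{i,i+1} + σ⁺_i σ⁻_{i+1} ⊗ U†_{i,i+1}`
on head qubits and data qudits. -/
noncomputable def uqiHU (U : Matrix (Fin d × Fin d) (Fin d × Fin d) ℂ) :
    Matrix ((Fin N → Fin 2) × (Fin N → Fin d))
      ((Fin N → Fin 2) × (Fin N → Fin d)) ℂ :=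
  fun p q => ∑ i ∈ (Finset.range (N - 1)).attach,
    have hi : i.1 < N - 1 := Finset.mem_range.mp i.2
    let a : Fin N := ⟨i.1, by omega⟩
    let b : Fin N := ⟨i.1 + 1, by omega⟩
    (if ∀ k, k ≠ a → k ≠ b → p.1 k = q.1 k then 1 else 0) *
    (if ∀ k, k ≠ a → k ≠ b → p.2 k = q.2 k then 1 else 0) *
    ((if p.1 a = 0 ∧ p.1 b = 1 ∧ q.1 a = 1 ∧ q.1 b = 0 then
        U (p.2 a, p.2 b) (q.2 a, q.2 b) else 0) +
     (if p.1 a = 1 ∧ p.1 b = 0 ∧ q.1 a = 0 ∧ q.1 b = 1 then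
        Uᴴ (p.2 a, p.2 b) (q.2 a, q.2 b) else 0))

/-- The adjacency matrix of the path graph on `N` vertices, over ℂ. -/
def pathMatrix : Matrix (Fin N) (Fin N) ℂ :=
  fun i j => if i.1 + 1 = j.1 ∨ j.1 + 1 = i.1 then 1 else 0

section AuxUQI
variable {N d : ℕ}


lemma exp_intertwine {P Q : Type*} [Fintype P] [DecidableEq P] [Fintype Q] [DecidableEq Q]
    (M : Matrix P P ℂ) (B : Matrix Q Q ℂ) (T : (Q → ℂ) →ₗ[ℂ] (P → ℂ))
    (h : ∀ c, M.mulVec (T c) = T (B.mulVec c)) (c : Q → ℂ) :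
    (NormedSpace.exp M).mulVec (T c) = T ((NormedSpace.exp B).mulVec c) := by
  letI : SeminormedRing (Matrix P P ℂ) := Matrix.linftyOpSemiNormedRing
  letI : NormedRing (Matrix P P ℂ) := Matrix.linftyOpNormedRing
  letI : NormedAlgebra ℂ (Matrix P P ℂ) := Matrix.linftyOpNormedAlgebra
  letI : SeminormedRing (Matrix Q Q ℂ) := Matrix.linftyOpSemiNormedRing
  letI : NormedRing (Matrix Q Q ℂ) := Matrix.linftyOpNormedRing
  letI : NormedAlgebra ℂ (Matrix Q Q ℂ) := Matrix.linftyOpNormedAlgebra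
  have hpow : ∀ (n : ℕ), (M ^ n).mulVec (T c) = T ((B ^ n).mulVec c) := by
    intro n
    induction n with
    | zero => simp
    | succ n ih =>
      rw [pow_succ', ← Matrix.mulVec_mulVec, ih, h, Matrix.mulVec_mulVec, ← pow_succ']
  have hsumM : Summable fun n : ℕ => ((n.factorial : ℂ)⁻¹) • M ^ n :=
    NormedSpace.expSeries_summable' (𝕂 := ℂ) M
  have hsumB : Summable fun n : ℕ => ((n.factorial : ℂ)⁻¹) • B ^ n :=
    NormedSpace.expSeries_summable' (𝕂 := ℂ) B
  -- continuous linear maps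
  let LM : Matrix P P ℂ →ₗ[ℂ] (P → ℂ) :=
    { toFun := fun A => A.mulVec (T c)
      map_add' := fun A A' => Matrix.add_mulVec A A' (T c)
      map_smul' := fun r A => smul_mulVec r A (T c) }
  let LB : Matrix Q Q ℂ →ₗ[ℂ] (Q → ℂ) :=
    { toFun := fun A => A.mulVec c
      map_add' := fun A A' => Matrix.add_mulVec A A' c
      map_smul' := fun r A => smul_mulVec r A c }
  have hTc : Continuous T := LinearMap.continuous_of_finiteDimensional T
  have hLMc : Continuous LM := LinearMap.continuous_of_finiteDimensional LM
  have hLBc : Continuous LB := LinearMap.continuous_of_finiteDimensional LB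
  have hexpM : NormedSpace.exp M = ∑' n : ℕ, ((n.factorial : ℂ)⁻¹) • M ^ n :=
    congrFun (NormedSpace.exp_eq_tsum ℂ) M
  have hexpB : NormedSpace.exp B = ∑' n : ℕ, ((n.factorial : ℂ)⁻¹) • B ^ n :=
    congrFun (NormedSpace.exp_eq_tsum ℂ) B
  rw [hexpM, hexpB]
  have h1 : (∑' n : ℕ, ((n.factorial : ℂ)⁻¹) • M ^ n).mulVec (T c)
      = ∑' n : ℕ, ((n.factorial : ℂ)⁻¹) • (M ^ n).mulVec (T c) := by
    have := (LinearMap.toContinuousLinearMap LM).map_tsum hsumM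
    simpa [LM, smul_mulVec] using this
  rw [h1]
  have h2 : ∀ n : ℕ, ((n.factorial : ℂ)⁻¹) • (M ^ n).mulVec (T c)
      = T (((n.factorial : ℂ)⁻¹) • (B ^ n).mulVec c) := by
    intro n; rw [hpow n, T.map_smul]
  simp_rw [h2]
  have hsum2 : Summable fun n : ℕ => ((n.factorial : ℂ)⁻¹) • (B ^ n).mulVec c := by
    have := (hsumB.map LB.toAddMonoidHom hLBc)
    simpa [LB, Function.comp_def, smul_mulVec] using this
  have h3 : ∑' n : ℕ, T (((n.factorial : ℂ)⁻¹) • (B ^ n).mulVec c)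
      = T (∑' n : ℕ, ((n.factorial : ℂ)⁻¹) • (B ^ n).mulVec c) := by
    exact ((LinearMap.toContinuousLinearMap T).map_tsum hsum2).symm
  rw [h3]
  congr 1
  have h4 : (∑' n : ℕ, ((n.factorial : ℂ)⁻¹) • B ^ n).mulVec c
      = ∑' n : ℕ, ((n.factorial : ℂ)⁻¹) • (B ^ n).mulVec c := by
    have := (LinearMap.toContinuousLinearMap LB).map_tsum hsumB
    simpa [LB, smul_mulVec] using this
  rw [h4]


lemma sum_agree {a b : Fin N} (hab : a ≠ b) (g : Fin N → Fin d) (F : (Fin N → Fin d) → ℂ) :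
    (∑ g' : Fin N → Fin d, (if ∀ k, k ≠ a → k ≠ b → g k = g' k then 1 else 0) * F g')
      = ∑ x : Fin d × Fin d, F (Function.update (Function.update g a x.1) b x.2) := by
  have hrec : ∀ g' : Fin N → Fin d, (∀ k, k ≠ a → k ≠ b → g k = g' k) →
      Function.update (Function.update g a (g' a)) b (g' b) = g' := by
    intro g' hg'
    funext k
    by_cases hk2 : k = b
    · subst hk2; rw [Function.update_self]
    · rw [Function.update_of_ne hk2]
      by_cases hk1 : k = a
      · subst hk1; rw [Function.update_self]
      · rw [Function.update_of_ne hk1]; exact hg' k hk1 hk2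
  simp only [ite_mul, one_mul, zero_mul]
  rw [Finset.sum_ite, Finset.sum_const_zero, add_zero]
  refine Finset.sum_nbij' (i := fun g' => (g' a, g' b))
    (j := fun x => Function.update (Function.update g a x.1) b x.2) ?_ ?_ ?_ ?_ ?_
  · intro x hx; exact Finset.mem_univ _
  · intro x hx
    simp only [Finset.mem_filter, Finset.mem_univ, true_and]
    intro k hk1 hk2
    rw [Function.update_of_ne hk2, Function.update_of_ne hk1]
  · intro g' hg'
    simp only [Finset.mem_filter, Finset.mem_univ, true_and] at hg'
    exact hrec g' hg'
  · intro x hx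
    rw [Function.update_self, Function.update_of_ne hab, Function.update_self]
  · intro g' hg'
    simp only [Finset.mem_filter, Finset.mem_univ, true_and] at hg'
    rw [hrec g' hg']

lemma applyU_comp {a b : Fin N} (hab : a ≠ b) (M M' : Matrix (Fin d × Fin d) (Fin d × Fin d) ℂ)
    (φ : (Fin N → Fin d) → ℂ) :
    applyU N d M a b (applyU N d M' a b φ) = applyU N d (M * M') a b φ := by
  funext g
  simp only [applyU, Matrix.mul_apply]
  have hval1 : ∀ x : Fin d × Fin d,
      (Function.update (Function.update g a x.1) b x.2) a = x.1 := fun x => by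
    rw [Function.update_of_ne hab, Function.update_self]
  have hval2 : ∀ x : Fin d × Fin d,
      (Function.update (Function.update g a x.1) b x.2) b = x.2 := fun x => by
    rw [Function.update_self]
  have hupd : ∀ x y : Fin d × Fin d,
      Function.update (Function.update (Function.update (Function.update g a x.1) b x.2) a y.1) b y.2
        = Function.update (Function.update g a y.1) b y.2 := by
    intro x y
    rw [Function.update_comm hab x.1 x.2 g, Function.update_idem,
        Function.update_comm hab.symm x.2 y.1 g, Function.update_idem]
  simp only [hval1, hval2, hupd, Prod.mk.eta, Finset.mul_sum]
  rw [Finset.sum_comm]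
  refine Finset.sum_congr rfl fun y _ => ?_
  rw [Finset.sum_mul]
  refine Finset.sum_congr rfl fun x _ => ?_
  ring

lemma applyU_one {a b : Fin N} (φ : (Fin N → Fin d) → ℂ) :
    applyU N d 1 a b φ = φ := by
  funext g
  simp only [applyU, Matrix.one_apply]
  simp only [ite_mul, one_mul, zero_mul]
  rw [Finset.sum_ite_eq Finset.univ (g a, g b)
      (fun x => φ (Function.update (Function.update g a x.1) b x.2))]
  simp [Function.update_eq_self]

lemma headVec_inj {i j : Fin N}
    (h : (fun k => if k = i then (1 : Fin 2) else 0) = (fun k => if k = j then 1 else 0)) :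
    i = j := by
  by_contra hij
  have := congrFun h i
  simp [hij] at this

def eVec {N : ℕ} (i : Fin N) : Fin N → Fin 2 := fun k => if k = i then 1 else 0

lemma bond_sum (U : Matrix (Fin d × Fin d) (Fin d × Fin d) ℂ)
    (hU : U ∈ Matrix.unitaryGroup (Fin d × Fin d) ℂ)
    (ψ : (Fin N → Fin d) → ℂ) (a b j : Fin N) (hab : a.1 + 1 = b.1)
    (f : Fin N → Fin 2) (g : Fin N → Fin d) :
    (∑ g' : Fin N → Fin d,
      ((if ∀ k, k ≠ a → k ≠ b → f k = eVec j k then (1:ℂ) else 0) *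
       (if ∀ k, k ≠ a → k ≠ b → g k = g' k then (1:ℂ) else 0) *
       ((if f a = 0 ∧ f b = 1 ∧ eVec j a = 1 ∧ eVec j b = 0 then
           U (g a, g b) (g' a, g' b) else 0) +
        (if f a = 1 ∧ f b = 0 ∧ eVec j a = 0 ∧ eVec j b = 1 then
           Uᴴ (g a, g b) (g' a, g' b) else 0))) * prodU N d U ψ j.1 g')
    = (if j = b then 1 else 0) * (if f = eVec a then 1 else 0) * prodU N d U ψ a.1 g
      + (if j = a then 1 else 0) * (if f = eVec b then 1 else 0) * prodU N d U ψ b.1 g := by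
  have hne : a ≠ b := by intro h; rw [h] at hab; omega
  have hprod : prodU N d U ψ b.1 = applyU N d U a b (prodU N d U ψ a.1) := by
    have hb1 : b.1 = a.1 + 1 := hab.symm
    have hlt : a.1 + 1 < N := by omega
    rw [hb1]
    show prodU N d U ψ (a.1 + 1) = _
    rw [prodU]
    rw [dif_pos hlt]
    exact congrArg₂ (fun (x y : Fin N) => applyU N d U x y (prodU N d U ψ a.1))
      (Fin.ext rfl) (Fin.ext hab)
  by_cases hja : j = a
  · subst hja
    have hea : eVec j j = 1 := by simp [eVec]
    have heb : eVec j b = 0 := by simp [eVec, Ne.symm hne]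
    have hmerge : ((∀ k, k ≠ j → k ≠ b → f k = eVec j k) ∧ f j = 0 ∧ f b = 1) ↔ f = eVec b := by
      constructor
      · rintro ⟨h1, h2, h3⟩
        funext k
        by_cases hkb : k = b
        · subst hkb; simpa [eVec] using h3
        · by_cases hkj : k = j
          · subst hkj; simpa [eVec, hkb] using h2
          · rw [h1 k hkj hkb]; simp [eVec, hkj, hkb]
      · rintro rfl
        refine ⟨fun k hk1 hk2 => ?_, ?_, ?_⟩
        · simp [eVec, hk1, hk2]
        · simp [eVec, hne]
        · simp [eVec]
    have hstep : ∀ g' : Fin N → Fin d,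
        ((if ∀ k, k ≠ j → k ≠ b → f k = eVec j k then (1:ℂ) else 0) *
         (if ∀ k, k ≠ j → k ≠ b → g k = g' k then (1:ℂ) else 0) *
         ((if f j = 0 ∧ f b = 1 ∧ eVec j j = 1 ∧ eVec j b = 0 then
             U (g j, g b) (g' j, g' b) else 0) +
          (if f j = 1 ∧ f b = 0 ∧ eVec j j = 0 ∧ eVec j b = 1 then
             Uᴴ (g j, g b) (g' j, g' b) else 0))) * prodU N d U ψ j.1 g'
        = (if f = eVec b then 1 else 0) *
          ((if ∀ k, k ≠ j → k ≠ b → g k = g' k then (1:ℂ) else 0) *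
            (U (g j, g b) (g' j, g' b) * prodU N d U ψ j.1 g')) := by
      intro g'
      rw [if_neg (show ¬(f j = 1 ∧ f b = 0 ∧ eVec j j = 0 ∧ eVec j b = 1) by
        rw [hea]; rintro ⟨-, -, h, -⟩; exact absurd h (by decide))]
      by_cases hc : (∀ k, k ≠ j → k ≠ b → f k = eVec j k) ∧ f j = 0 ∧ f b = 1
      · rw [if_pos hc.1,
            if_pos (show f j = 0 ∧ f b = 1 ∧ eVec j j = 1 ∧ eVec j b = 0 from
              ⟨hc.2.1, hc.2.2, hea, heb⟩),
            if_pos (hmerge.mp hc)]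
        ring
      · rw [if_neg (show ¬ f = eVec b from fun h => hc (hmerge.mpr h))]
        by_cases hc1 : ∀ k, k ≠ j → k ≠ b → f k = eVec j k
        · rw [if_pos hc1,
            if_neg (show ¬(f j = 0 ∧ f b = 1 ∧ eVec j j = 1 ∧ eVec j b = 0) by
              rintro ⟨h1, h2, -⟩; exact hc ⟨hc1, h1, h2⟩)]
          ring
        · rw [if_neg hc1]; ring
    rw [Finset.sum_congr rfl fun g' _ => hstep g']
    rw [← Finset.mul_sum, sum_agree hne g
      (fun g' => U (g j, g b) (g' j, g' b) * prodU N d U ψ j.1 g')]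
    have hval1 : ∀ x : Fin d × Fin d,
        (Function.update (Function.update g j x.1) b x.2) j = x.1 := fun x => by
      rw [Function.update_of_ne hne, Function.update_self]
    have hval2 : ∀ x : Fin d × Fin d,
        (Function.update (Function.update g j x.1) b x.2) b = x.2 := fun x => by
      rw [Function.update_self]
    have : (∑ x : Fin d × Fin d,
        U (g j, g b) ((Function.update (Function.update g j x.1) b x.2) j,
          (Function.update (Function.update g j x.1) b x.2) b) *
          prodU N d U ψ j.1 (Function.update (Function.update g j x.1) b x.2))
        = applyU N d U j b (prodU N d U ψ j.1) g := by
      rw [applyU]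
      exact Finset.sum_congr rfl fun x _ => by rw [hval1, hval2]
    rw [this, ← hprod]
    rw [if_neg (show ¬ j = b from hne), if_pos (show j = j from rfl)]
    ring
  · by_cases hjb : j = b
    · subst hjb
      have hea : eVec j a = 0 := by simp [eVec, hne]
      have heb : eVec j j = 1 := by simp [eVec]
      have hmerge : ((∀ k, k ≠ a → k ≠ j → f k = eVec j k) ∧ f a = 1 ∧ f j = 0) ↔ f = eVec a := by
        constructor
        · rintro ⟨h1, h2, h3⟩
          funext k
          by_cases hka : k = a
          · subst hka; simpa [eVec] using h2
          · by_cases hkj : k = j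
            · subst hkj; simpa [eVec, Ne.symm hne] using h3
            · rw [h1 k hka hkj]; simp [eVec, hka, hkj]
        · rintro rfl
          refine ⟨fun k hk1 hk2 => ?_, ?_, ?_⟩
          · simp [eVec, hk1, hk2]
          · simp [eVec]
          · simp [eVec, Ne.symm hne]
      have hstep : ∀ g' : Fin N → Fin d,
          ((if ∀ k, k ≠ a → k ≠ j → f k = eVec j k then (1:ℂ) else 0) *
           (if ∀ k, k ≠ a → k ≠ j → g k = g' k then (1:ℂ) else 0) *
           ((if f a = 0 ∧ f j = 1 ∧ eVec j a = 1 ∧ eVec j j = 0 then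
               U (g a, g j) (g' a, g' j) else 0) +
            (if f a = 1 ∧ f j = 0 ∧ eVec j a = 0 ∧ eVec j j = 1 then
               Uᴴ (g a, g j) (g' a, g' j) else 0))) * prodU N d U ψ j.1 g'
          = (if f = eVec a then 1 else 0) *
            ((if ∀ k, k ≠ a → k ≠ j → g k = g' k then (1:ℂ) else 0) *
              (Uᴴ (g a, g j) (g' a, g' j) * prodU N d U ψ j.1 g')) := by
        intro g'
        rw [if_neg (show ¬(f a = 0 ∧ f j = 1 ∧ eVec j a = 1 ∧ eVec j j = 0) by
          rw [hea]; rintro ⟨-, -, h, -⟩; exact absurd h (by decide))]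
        by_cases hc : (∀ k, k ≠ a → k ≠ j → f k = eVec j k) ∧ f a = 1 ∧ f j = 0
        · rw [if_pos hc.1,
              if_pos (show f a = 1 ∧ f j = 0 ∧ eVec j a = 0 ∧ eVec j j = 1 from
                ⟨hc.2.1, hc.2.2, hea, heb⟩),
              if_pos (hmerge.mp hc)]
          ring
        · rw [if_neg (show ¬ f = eVec a from fun h => hc (hmerge.mpr h))]
          by_cases hc1 : ∀ k, k ≠ a → k ≠ j → f k = eVec j k
          · rw [if_pos hc1,
              if_neg (show ¬(f a = 1 ∧ f j = 0 ∧ eVec j a = 0 ∧ eVec j j = 1) by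
                rintro ⟨h1, h2, -⟩; exact hc ⟨hc1, h1, h2⟩)]
            ring
          · rw [if_neg hc1]; ring
      rw [Finset.sum_congr rfl fun g' _ => hstep g']
      rw [← Finset.mul_sum, sum_agree hne g
        (fun g' => Uᴴ (g a, g j) (g' a, g' j) * prodU N d U ψ j.1 g')]
      have hval1 : ∀ x : Fin d × Fin d,
          (Function.update (Function.update g a x.1) j x.2) a = x.1 := fun x => by
        rw [Function.update_of_ne hne, Function.update_self]
      have hval2 : ∀ x : Fin d × Fin d,
          (Function.update (Function.update g a x.1) j x.2) j = x.2 := fun x => by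
        rw [Function.update_self]
      have hsum : (∑ x : Fin d × Fin d,
          Uᴴ (g a, g j) ((Function.update (Function.update g a x.1) j x.2) a,
            (Function.update (Function.update g a x.1) j x.2) j) *
            prodU N d U ψ j.1 (Function.update (Function.update g a x.1) j x.2))
          = applyU N d Uᴴ a j (prodU N d U ψ j.1) g := by
        rw [applyU]
        exact Finset.sum_congr rfl fun x _ => by rw [hval1, hval2]
      rw [hsum, hprod, applyU_comp hne]
      have hUU : Uᴴ * U = 1 := by
        rw [← Matrix.star_eq_conjTranspose]
        exact hU.1
      rw [hUU, applyU_one]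
      rw [if_pos (show j = j from rfl), if_neg (show ¬ j = a from fun h => hne h.symm)]
      ring
    · -- neither
      have hea : eVec j a = 0 := by simp [eVec]; exact fun h => hja h.symm
      have heb : eVec j b = 0 := by simp [eVec]; exact fun h => hjb h.symm
      rw [if_neg hjb, if_neg hja]
      rw [Finset.sum_eq_zero, zero_mul, zero_mul, zero_mul, zero_mul, add_zero]
      intro g' _
      rw [if_neg (show ¬(f a = 0 ∧ f b = 1 ∧ eVec j a = 1 ∧ eVec j b = 0) by
            rw [hea]; rintro ⟨-, -, h, -⟩; exact absurd h (by decide)),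
          if_neg (show ¬(f a = 1 ∧ f b = 0 ∧ eVec j a = 0 ∧ eVec j b = 1) by
            rw [heb]; rintro ⟨-, -, -, h⟩; exact absurd h (by decide))]
      ring

lemma mulVec_basis (U : Matrix (Fin d × Fin d) (Fin d × Fin d) ℂ)
    (hU : U ∈ Matrix.unitaryGroup (Fin d × Fin d) ℂ)
    (ψ : (Fin N → Fin d) → ℂ) (j : Fin N) (f : Fin N → Fin 2) (g : Fin N → Fin d) :
    (uqiHU N d U).mulVec
        (fun q => (if q.1 = eVec j then (1:ℂ) else 0) * prodU N d U ψ j.1 q.2) (f, g)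
      = ∑ i : Fin N, pathMatrix N i j *
          ((if f = eVec i then (1:ℂ) else 0) * prodU N d U ψ i.1 g) := by
  have hjN : j.1 < N := j.isLt
  set Wp : ℂ := if h : j.1 + 1 < N then
      (if f = eVec ⟨j.1+1, h⟩ then 1 else 0) * prodU N d U ψ (j.1+1) g else 0 with hWp
  set Wm : ℂ := if h : 0 < j.1 then
      (if f = eVec ⟨j.1-1, by omega⟩ then 1 else 0) * prodU N d U ψ (j.1-1) g else 0 with hWm
  have hLHS : (uqiHU N d U).mulVec
      (fun q => (if q.1 = eVec j then (1:ℂ) else 0) * prodU N d U ψ j.1 q.2) (f, g)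
      = Wm + Wp := by
    show (∑ q : (Fin N → Fin 2) × (Fin N → Fin d), uqiHU N d U (f, g) q *
        ((if q.1 = eVec j then (1:ℂ) else 0) * prodU N d U ψ j.1 q.2)) = Wm + Wp
    rw [Fintype.sum_prod_type]
    have h1 : ∀ f' : Fin N → Fin 2,
        (∑ g' : Fin N → Fin d, uqiHU N d U (f, g) (f', g') *
          ((if f' = eVec j then (1:ℂ) else 0) * prodU N d U ψ j.1 g'))
        = if f' = eVec j then
            (∑ g' : Fin N → Fin d, uqiHU N d U (f, g) (f', g') * prodU N d U ψ j.1 g')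
          else 0 := by
      intro f'
      by_cases h : f' = eVec j <;> simp [h]
    rw [Finset.sum_congr rfl fun f' _ => h1 f']
    rw [Finset.sum_ite_eq' Finset.univ (eVec j)
      (fun f' => ∑ g' : Fin N → Fin d, uqiHU N d U (f, g) (f', g') * prodU N d U ψ j.1 g'),
      if_pos (Finset.mem_univ _)]
    -- unfold the Hamiltonian and swap sums
    have h2 : (∑ g' : Fin N → Fin d, uqiHU N d U (f, g) (eVec j, g') * prodU N d U ψ j.1 g')
        = ∑ i ∈ (Finset.range (N - 1)).attach,
            ∑ g' : Fin N → Fin d,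
            (((if ∀ k, k ≠ (⟨i.1, by have := Finset.mem_range.mp i.2; omega⟩ : Fin N) →
                    k ≠ (⟨i.1 + 1, by have := Finset.mem_range.mp i.2; omega⟩ : Fin N) →
                    f k = eVec j k then (1:ℂ) else 0) *
              (if ∀ k, k ≠ (⟨i.1, by have := Finset.mem_range.mp i.2; omega⟩ : Fin N) →
                    k ≠ (⟨i.1 + 1, by have := Finset.mem_range.mp i.2; omega⟩ : Fin N) →
                    g k = g' k then (1:ℂ) else 0) *
              ((if f ⟨i.1, by have := Finset.mem_range.mp i.2; omega⟩ = 0 ∧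
                    f ⟨i.1 + 1, by have := Finset.mem_range.mp i.2; omega⟩ = 1 ∧
                    eVec j ⟨i.1, by have := Finset.mem_range.mp i.2; omega⟩ = 1 ∧
                    eVec j ⟨i.1 + 1, by have := Finset.mem_range.mp i.2; omega⟩ = 0 then
                  U (g ⟨i.1, by have := Finset.mem_range.mp i.2; omega⟩,
                     g ⟨i.1 + 1, by have := Finset.mem_range.mp i.2; omega⟩)
                    (g' ⟨i.1, by have := Finset.mem_range.mp i.2; omega⟩,
                     g' ⟨i.1 + 1, by have := Finset.mem_range.mp i.2; omega⟩) else 0) +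
               (if f ⟨i.1, by have := Finset.mem_range.mp i.2; omega⟩ = 1 ∧
                    f ⟨i.1 + 1, by have := Finset.mem_range.mp i.2; omega⟩ = 0 ∧
                    eVec j ⟨i.1, by have := Finset.mem_range.mp i.2; omega⟩ = 0 ∧
                    eVec j ⟨i.1 + 1, by have := Finset.mem_range.mp i.2; omega⟩ = 1 then
                  Uᴴ (g ⟨i.1, by have := Finset.mem_range.mp i.2; omega⟩,
                      g ⟨i.1 + 1, by have := Finset.mem_range.mp i.2; omega⟩)
                    (g' ⟨i.1, by have := Finset.mem_range.mp i.2; omega⟩,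
                     g' ⟨i.1 + 1, by have := Finset.mem_range.mp i.2; omega⟩) else 0))) *
              prodU N d U ψ j.1 g') := by
      rw [Finset.sum_comm]
      refine Finset.sum_congr rfl fun g' _ => ?_
      rw [uqiHU, Finset.sum_mul]
    rw [h2]
    have h3 : ∀ i ∈ (Finset.range (N - 1)).attach, ∀ him : i.1 < N - 1,
        (∑ g' : Fin N → Fin d,
          (((if ∀ k, k ≠ (⟨i.1, by omega⟩ : Fin N) → k ≠ (⟨i.1 + 1, by omega⟩ : Fin N) →
                  f k = eVec j k then (1:ℂ) else 0) *
            (if ∀ k, k ≠ (⟨i.1, by omega⟩ : Fin N) → k ≠ (⟨i.1 + 1, by omega⟩ : Fin N) →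
                  g k = g' k then (1:ℂ) else 0) *
            ((if f ⟨i.1, by omega⟩ = 0 ∧ f ⟨i.1 + 1, by omega⟩ = 1 ∧
                  eVec j ⟨i.1, by omega⟩ = 1 ∧ eVec j ⟨i.1 + 1, by omega⟩ = 0 then
                U (g ⟨i.1, by omega⟩, g ⟨i.1 + 1, by omega⟩)
                  (g' ⟨i.1, by omega⟩, g' ⟨i.1 + 1, by omega⟩) else 0) +
             (if f ⟨i.1, by omega⟩ = 1 ∧ f ⟨i.1 + 1, by omega⟩ = 0 ∧
                  eVec j ⟨i.1, by omega⟩ = 0 ∧ eVec j ⟨i.1 + 1, by omega⟩ = 1 then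
                Uᴴ (g ⟨i.1, by omega⟩, g ⟨i.1 + 1, by omega⟩)
                  (g' ⟨i.1, by omega⟩, g' ⟨i.1 + 1, by omega⟩) else 0))) *
            prodU N d U ψ j.1 g'))
        = (if j = (⟨i.1 + 1, by omega⟩ : Fin N) then 1 else 0) *
            (if f = eVec ⟨i.1, by omega⟩ then 1 else 0) * prodU N d U ψ i.1 g
          + (if j = (⟨i.1, by omega⟩ : Fin N) then 1 else 0) *
            (if f = eVec ⟨i.1 + 1, by omega⟩ then 1 else 0) * prodU N d U ψ (i.1 + 1) g := by
      intro i _ him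
      exact bond_sum U hU ψ ⟨i.1, by omega⟩ ⟨i.1 + 1, by omega⟩ j rfl f g
    rw [Finset.sum_congr rfl fun i hi => h3 i hi (Finset.mem_range.mp i.2)]
    rw [Finset.sum_add_distrib]
    congr 1
    · -- sum of first components = Wm
      by_cases hj : 0 < j.1
      · have hmem : j.1 - 1 ∈ Finset.range (N - 1) := by
          rw [Finset.mem_range]; omega
        rw [Finset.sum_eq_single (⟨j.1 - 1, hmem⟩ : {x // x ∈ Finset.range (N - 1)})]
        · rw [if_pos (show j = ⟨(j.1-1) + 1, by omega⟩ from Fin.ext (by simp; omega))]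
          rw [hWm, dif_pos hj, one_mul]
        · intro b _ hb
          rw [if_neg (show ¬ j = ⟨b.1 + 1, by have := Finset.mem_range.mp b.2; omega⟩ by
            intro h
            apply hb
            apply Subtype.ext
            have : j.1 = b.1 + 1 := congrArg Fin.val h
            simp; omega), zero_mul, zero_mul]
        · intro h; exact absurd (Finset.mem_attach _ _) h
      · rw [Finset.sum_eq_zero, hWm, dif_neg hj]
        intro i _
        rw [if_neg (show ¬ j = ⟨i.1 + 1, by have := Finset.mem_range.mp i.2; omega⟩ by
          intro h
          have : j.1 = i.1 + 1 := congrArg Fin.val h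
          omega), zero_mul, zero_mul]
    · -- sum of second components = Wp
      by_cases hj : j.1 + 1 < N
      · have hmem : j.1 ∈ Finset.range (N - 1) := by
          rw [Finset.mem_range]; omega
        rw [Finset.sum_eq_single (⟨j.1, hmem⟩ : {x // x ∈ Finset.range (N - 1)})]
        · rw [if_pos (show j = ⟨j.1, by omega⟩ from Fin.ext rfl)]
          rw [hWp, dif_pos hj, one_mul]
        · intro b _ hb
          rw [if_neg (show ¬ j = ⟨b.1, by have := Finset.mem_range.mp b.2; omega⟩ by
            intro h
            apply hb
            apply Subtype.ext
            have : j.1 = b.1 := congrArg Fin.val h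
            simp; omega), zero_mul, zero_mul]
        · intro h; exact absurd (Finset.mem_attach _ _) h
      · rw [Finset.sum_eq_zero, hWp, dif_neg hj]
        intro i _
        rw [if_neg (show ¬ j = ⟨i.1, by have := Finset.mem_range.mp i.2; omega⟩ by
          intro h
          have : j.1 = i.1 := congrArg Fin.val h
          have := Finset.mem_range.mp i.2
          omega), zero_mul, zero_mul]
  rw [hLHS]
  -- path side
  have hsplit : ∀ i : Fin N, pathMatrix N i j
      = (if i.1 + 1 = j.1 then (1:ℂ) else 0) + (if j.1 + 1 = i.1 then 1 else 0) := by
    intro i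
    simp only [pathMatrix]
    by_cases h1 : i.1 + 1 = j.1 <;> by_cases h2 : j.1 + 1 = i.1
    · omega
    · simp [h1, h2]
    · simp [h1, h2]
    · simp [h1, h2]
  rw [Finset.sum_congr rfl fun i _ => by rw [hsplit i, add_mul]]
  rw [Finset.sum_add_distrib]
  congr 1
  · -- = Wm
    by_cases hj : 0 < j.1
    · rw [Finset.sum_eq_single (⟨j.1 - 1, by omega⟩ : Fin N)]
      · rw [if_pos (show (j.1 - 1) + 1 = j.1 by omega), hWm, dif_pos hj, one_mul]
      · intro b _ hb
        rw [if_neg (show ¬ b.1 + 1 = j.1 by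
          intro h
          exact hb (Fin.ext (by simp; omega))), zero_mul]
      · intro h; exact absurd (Finset.mem_univ _) h
    · rw [Finset.sum_eq_zero, hWm, dif_neg hj]
      intro i _
      rw [if_neg (by omega), zero_mul]
  · -- = Wp
    by_cases hj : j.1 + 1 < N
    · rw [Finset.sum_eq_single (⟨j.1 + 1, hj⟩ : Fin N)]
      · rw [if_pos rfl, hWp, dif_pos hj, one_mul]
      · intro b _ hb
        rw [if_neg (show ¬ j.1 + 1 = b.1 by
          intro h
          exact hb (Fin.ext (by simp; omega))), zero_mul]
      · intro h; exact absurd (Finset.mem_univ _) h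
    · rw [Finset.sum_eq_zero, hWp, dif_neg hj]
      intro i _
      rw [if_neg (show ¬ j.1 + 1 = i.1 by have := i.isLt; omega), zero_mul]

lemma uqiHU_isHermitian (U : Matrix (Fin d × Fin d) (Fin d × Fin d) ℂ) :
    (uqiHU N d U).IsHermitian := by
  rw [Matrix.IsHermitian]
  ext p q
  rw [Matrix.conjTranspose_apply, uqiHU, uqiHU, star_sum]
  refine Finset.sum_congr rfl fun i _ => ?_
  have hi : i.1 < N - 1 := Finset.mem_range.mp i.2
  set a : Fin N := ⟨i.1, by omega⟩
  set b : Fin N := ⟨i.1 + 1, by omega⟩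
  rw [star_mul', star_mul', star_add]
  have h1 : star (if ∀ k, k ≠ a → k ≠ b → q.1 k = p.1 k then (1:ℂ) else 0)
      = if ∀ k, k ≠ a → k ≠ b → p.1 k = q.1 k then (1:ℂ) else 0 := by
    rw [if_congr (show (∀ k, k ≠ a → k ≠ b → q.1 k = p.1 k) ↔ (∀ k, k ≠ a → k ≠ b → p.1 k = q.1 k)
      from ⟨fun h k h1 h2 => (h k h1 h2).symm, fun h k h1 h2 => (h k h1 h2).symm⟩) rfl rfl]
    by_cases h : ∀ k, k ≠ a → k ≠ b → p.1 k = q.1 k <;> simp [h]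
  have h2 : star (if ∀ k, k ≠ a → k ≠ b → q.2 k = p.2 k then (1:ℂ) else 0)
      = if ∀ k, k ≠ a → k ≠ b → p.2 k = q.2 k then (1:ℂ) else 0 := by
    rw [if_congr (show (∀ k, k ≠ a → k ≠ b → q.2 k = p.2 k) ↔ (∀ k, k ≠ a → k ≠ b → p.2 k = q.2 k)
      from ⟨fun h k h1 h2 => (h k h1 h2).symm, fun h k h1 h2 => (h k h1 h2).symm⟩) rfl rfl]
    by_cases h : ∀ k, k ≠ a → k ≠ b → p.2 k = q.2 k <;> simp [h]
  have h3 : star (if q.1 a = 0 ∧ q.1 b = 1 ∧ p.1 a = 1 ∧ p.1 b = 0 then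
        U (q.2 a, q.2 b) (p.2 a, p.2 b) else 0)
      = if p.1 a = 1 ∧ p.1 b = 0 ∧ q.1 a = 0 ∧ q.1 b = 1 then
        Uᴴ (p.2 a, p.2 b) (q.2 a, q.2 b) else 0 := by
    rw [if_congr (show (q.1 a = 0 ∧ q.1 b = 1 ∧ p.1 a = 1 ∧ p.1 b = 0)
        ↔ (p.1 a = 1 ∧ p.1 b = 0 ∧ q.1 a = 0 ∧ q.1 b = 1) from
      ⟨fun ⟨x, y, z, w⟩ => ⟨z, w, x, y⟩, fun ⟨x, y, z, w⟩ => ⟨z, w, x, y⟩⟩) rfl rfl]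
    by_cases h : p.1 a = 1 ∧ p.1 b = 0 ∧ q.1 a = 0 ∧ q.1 b = 1
    · rw [if_pos h, if_pos h]; rfl
    · rw [if_neg h, if_neg h, star_zero]
  have h4 : star (if q.1 a = 1 ∧ q.1 b = 0 ∧ p.1 a = 0 ∧ p.1 b = 1 then
        Uᴴ (q.2 a, q.2 b) (p.2 a, p.2 b) else 0)
      = if p.1 a = 0 ∧ p.1 b = 1 ∧ q.1 a = 1 ∧ q.1 b = 0 then
        U (p.2 a, p.2 b) (q.2 a, q.2 b) else 0 := by
    rw [if_congr (show (q.1 a = 1 ∧ q.1 b = 0 ∧ p.1 a = 0 ∧ p.1 b = 1)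
        ↔ (p.1 a = 0 ∧ p.1 b = 1 ∧ q.1 a = 1 ∧ q.1 b = 0) from
      ⟨fun ⟨x, y, z, w⟩ => ⟨z, w, x, y⟩, fun ⟨x, y, z, w⟩ => ⟨z, w, x, y⟩⟩) rfl rfl]
    by_cases h : p.1 a = 0 ∧ p.1 b = 1 ∧ q.1 a = 1 ∧ q.1 b = 0
    · rw [if_pos h, if_pos h]; simp [Matrix.conjTranspose_apply]
    · rw [if_neg h, if_neg h, star_zero]
  rw [h1, h2, h3, h4]
  ring

lemma eVec_inj {i j : Fin N} (h : eVec i = eVec j) : i = j := by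
  by_contra hij
  have := congrFun h i
  simp [eVec, hij] at this

noncomputable def Tlin (U : Matrix (Fin d × Fin d) (Fin d × Fin d) ℂ)
    (ψ : (Fin N → Fin d) → ℂ) :
    (Fin N → ℂ) →ₗ[ℂ] (((Fin N → Fin 2) × (Fin N → Fin d)) → ℂ) where
  toFun c := fun q => ∑ i : Fin N,
    c i * ((if q.1 = eVec i then (1:ℂ) else 0) * prodU N d U ψ i.1 q.2)
  map_add' c c' := by
    funext q
    simp only [Pi.add_apply]
    rw [← Finset.sum_add_distrib]
    exact Finset.sum_congr rfl fun i _ => by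
      by_cases h : q.1 = eVec i <;> simp [h] <;> ring
  map_smul' r c := by
    funext q
    simp only [RingHom.id_apply, Pi.smul_apply, smul_eq_mul, Finset.mul_sum]
    exact Finset.sum_congr rfl fun i _ => by
      by_cases h : q.1 = eVec i <;> simp [h] <;> ring

lemma intertwine (U : Matrix (Fin d × Fin d) (Fin d × Fin d) ℂ)
    (hU : U ∈ Matrix.unitaryGroup (Fin d × Fin d) ℂ)
    (ψ : (Fin N → Fin d) → ℂ) (c : Fin N → ℂ) :
    (uqiHU N d U).mulVec (Tlin U ψ c) = Tlin U ψ ((pathMatrix N).mulVec c) := by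
  funext p
  obtain ⟨f, g⟩ := p
  show (∑ q : (Fin N → Fin 2) × (Fin N → Fin d), uqiHU N d U (f, g) q *
      (∑ i : Fin N, c i * ((if q.1 = eVec i then (1:ℂ) else 0) * prodU N d U ψ i.1 q.2)))
    = ∑ i : Fin N, (∑ i' : Fin N, pathMatrix N i i' * c i') *
        ((if f = eVec i then (1:ℂ) else 0) * prodU N d U ψ i.1 g)
  simp only [Finset.mul_sum]
  rw [Finset.sum_comm]
  have h1 : ∀ i : Fin N,
      (∑ q : (Fin N → Fin 2) × (Fin N → Fin d), uqiHU N d U (f, g) q *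
        (c i * ((if q.1 = eVec i then (1:ℂ) else 0) * prodU N d U ψ i.1 q.2)))
      = c i * ∑ i' : Fin N, pathMatrix N i' i *
          ((if f = eVec i' then (1:ℂ) else 0) * prodU N d U ψ i'.1 g) := by
    intro i
    rw [← mulVec_basis U hU ψ i f g]
    show _ = c i * ∑ q : (Fin N → Fin 2) × (Fin N → Fin d), uqiHU N d U (f, g) q *
      ((if q.1 = eVec i then (1:ℂ) else 0) * prodU N d U ψ i.1 q.2)
    rw [Finset.mul_sum]
    exact Finset.sum_congr rfl fun q _ => by ring
  rw [Finset.sum_congr rfl fun i _ => h1 i]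
  simp only [Finset.mul_sum]
  rw [Finset.sum_comm]
  refine Finset.sum_congr rfl fun i _ => ?_
  rw [Finset.sum_mul]
  refine Finset.sum_congr rfl fun i' _ => ?_
  ring

end AuxUQI

/-- `H = Σ σ⁻_i σ⁺_{i+1} ⊗ U_{i,i+1} + h.c.` is Hermitian, and in the
single-excitation head sector the head-at-site-`N` component of
`e^{−iHt}(|1⟩^a ⊗ |ψ⟩)` is `f_N(t) · U_{N−1,N} ⋯ U_{1,2}|ψ⟩`, where
`f_N(t) = ⟨N|e^{−iAt}|1⟩` is the transfer amplitude of the bare hopping chain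
(`A` the path-graph adjacency matrix). -/
theorem uqiHU_hermitian_and_transfer (hN : 0 < N)
    (U : Matrix (Fin d × Fin d) (Fin d × Fin d) ℂ)
    (hU : U ∈ Matrix.unitaryGroup (Fin d × Fin d) ℂ) :
    (uqiHU N d U).IsHermitian ∧
    ∀ (t : ℝ) (ψ : (Fin N → Fin d) → ℂ),
      (fun g : Fin N → Fin d =>
          (NormedSpace.exp ((-(Complex.I * t)) • uqiHU N d U)).mulVec
            (tensorState N d (headState N ⟨0, hN⟩) ψ)
            ((fun k => if k = (⟨N - 1, by omega⟩ : Fin N) then 1 else 0), g)) =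
        fun g : Fin N → Fin d =>
          (NormedSpace.exp ((-(Complex.I * t)) • pathMatrix N))
              ⟨N - 1, by omega⟩ ⟨0, hN⟩ *
            prodU N d U ψ (N - 1) g := by
  refine ⟨uqiHU_isHermitian U, ?_⟩
  intro t ψ
  funext g
  have hNN : N - 1 < N := by omega
  set s : ℂ := -(Complex.I * t) with hs
  have hint : ∀ c : Fin N → ℂ,
      (s • uqiHU N d U).mulVec (Tlin U ψ c) = Tlin U ψ ((s • pathMatrix N).mulVec c) := by
    intro c
    rw [smul_mulVec, intertwine U hU ψ c, ← LinearMap.map_smul (Tlin U ψ),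
        ← smul_mulVec]
  have hkey := exp_intertwine (s • uqiHU N d U) (s • pathMatrix N) (Tlin U ψ) hint
    (Pi.single (⟨0, hN⟩ : Fin N) 1)
  have hinit : Tlin U ψ (Pi.single (⟨0, hN⟩ : Fin N) (1:ℂ))
      = tensorState N d (headState N ⟨0, hN⟩) ψ := by
    funext q
    simp only [Tlin, LinearMap.coe_mk, AddHom.coe_mk]
    rw [Finset.sum_eq_single (⟨0, hN⟩ : Fin N)]
    · rw [Pi.single_eq_same, one_mul]
      rfl
    · intro b _ hb
      rw [Pi.single_eq_of_ne hb, zero_mul]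
    · intro h; exact absurd (Finset.mem_univ _) h
  rw [hinit] at hkey
  rw [hkey]
  simp only [Tlin, LinearMap.coe_mk, AddHom.coe_mk]
  rw [Finset.sum_eq_single (⟨N - 1, hNN⟩ : Fin N)]
  · rw [if_pos (show (fun k => if k = (⟨N - 1, by omega⟩ : Fin N) then (1 : Fin 2) else 0)
        = eVec ⟨N - 1, hNN⟩ from rfl), one_mul]
    have hmv : ((NormedSpace.exp (s • pathMatrix N)).mulVec
        (Pi.single (⟨0, hN⟩ : Fin N) 1)) ⟨N - 1, hNN⟩
        = (NormedSpace.exp (s • pathMatrix N)) ⟨N - 1, hNN⟩ ⟨0, hN⟩ := by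
      rw [Matrix.mulVec_single]; exact mul_one _
    rw [hmv]
  · intro b _ hb
    rw [if_neg, zero_mul, mul_zero]
    intro h
    exact hb (eVec_inj (N := N) h).symm
  · intro h; exact absurd (Finset.mem_univ _) h
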